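/- For all m ≥ 1 and k ≥ 1, the grid graph P_m □ P_k (the Cartesian product of the path on m vertices with the path on k vertices) is stackable. -/

import Mathlib

/-- A cup-stacking move in graph `G`: all cups from `u` are moved to `v`, where
`u ≠ v`, both have at least one cup, and `dist G u v = C u`. -/
def CupMove {V : Type*} [DecidableEq V] (G : SimpleGraph V) (C C' : V → ℕ) : Prop :=
  ∃ u v : V, u ≠ v ∧ 1 ≤ C u ∧ 1 ≤ C v ∧ G.dist u v = C u ∧
    ∀ w, C' w = if w = u then 0 else if w = v then C u + C v else C w

/-- `G` is `(C, r)`-stackable: some finite sequence of cup-stacking moves starting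
from `C` reaches the configuration with all `|C|` cups on `r` and none elsewhere. -/
def IsStackableConf {V : Type*} [Fintype V] [DecidableEq V]
    (G : SimpleGraph V) (C : V → ℕ) (r : V) : Prop :=
  Relation.ReflTransGen (CupMove G) C (fun w => if w = r then ∑ v, C v else 0)

/-- `G` is `r`-stackable: `(𝟏, r)`-stackable where `𝟏` has one cup on each vertex. -/
def IsStackableAt {V : Type*} [Fintype V] [DecidableEq V]
    (G : SimpleGraph V) (r : V) : Prop :=
  IsStackableConf G (fun _ => 1) r

/-- `G` is stackable: `r`-stackable for every vertex `r`. -/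
def IsStackable {V : Type*} [Fintype V] [DecidableEq V] (G : SimpleGraph V) : Prop :=
  ∀ r : V, IsStackableAt G r


-- path graph: walks of the right length exist
lemma pathGraph_exists_walk (n : ℕ) (a c : Fin n) :
    ∃ w : (SimpleGraph.pathGraph n).Walk a c, w.length = Nat.dist a.val c.val := by
  generalize hd : Nat.dist a.val c.val = d
  induction d generalizing a with
  | zero =>
    have : a = c := Fin.ext (Nat.eq_of_dist_eq_zero hd)
    subst this
    exact ⟨SimpleGraph.Walk.nil, rfl⟩
  | succ d ih =>
    rcases lt_or_gt_of_ne (fun h : a.val = c.val => by simp [Nat.dist, h] at hd) with hlt | hgt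
    · have hb : a.val + 1 < n := lt_of_le_of_lt hlt c.isLt
      set b : Fin n := ⟨a.val + 1, hb⟩ with hbdef
      have hadj : (SimpleGraph.pathGraph n).Adj a b := by
        rw [SimpleGraph.pathGraph_adj]; left; rfl
      have hd' : Nat.dist b.val c.val = d := by
        simp only [hbdef, Nat.dist] at hd ⊢; omega
      obtain ⟨w, hw⟩ := ih b hd'
      exact ⟨SimpleGraph.Walk.cons hadj w, by simp [hw]⟩
    · have hb : a.val - 1 < n := by omega
      set b : Fin n := ⟨a.val - 1, hb⟩ with hbdef
      have hadj : (SimpleGraph.pathGraph n).Adj a b := by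
        rw [SimpleGraph.pathGraph_adj]; right; simp [hbdef]; omega
      have hd' : Nat.dist b.val c.val = d := by
        simp only [hbdef, Nat.dist] at hd ⊢; omega
      obtain ⟨w, hw⟩ := ih b hd'
      exact ⟨SimpleGraph.Walk.cons hadj w, by simp [hw]⟩

lemma pathGraph_adj_dist {n : ℕ} {a b : Fin n} (h : (SimpleGraph.pathGraph n).Adj a b) :
    Nat.dist a.val b.val = 1 := by
  rw [SimpleGraph.pathGraph_adj] at h
  simp [Nat.dist]; omega

-- lower bound for walks in the grid
lemma grid_walk_length_ge {m k : ℕ} {x y : Fin m × Fin k}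
    (w : ((SimpleGraph.pathGraph m).boxProd (SimpleGraph.pathGraph k)).Walk x y) :
    Nat.dist x.1.val y.1.val + Nat.dist x.2.val y.2.val ≤ w.length := by
  induction w with
  | nil => simp [Nat.dist_self]
  | cons h p ih =>
    rename_i u v z
    rw [SimpleGraph.boxProd_adj] at h
    rcases h with ⟨h1, h2⟩ | ⟨h1, h2⟩
    · have : Nat.dist u.1.val v.1.val = 1 := pathGraph_adj_dist h1
      have t1 := Nat.dist.triangle_inequality u.1.val v.1.val z.1.val
      have t2 : Nat.dist u.2.val z.2.val = Nat.dist v.2.val z.2.val := by rw [h2]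
      simp only [SimpleGraph.Walk.length_cons]
      omega
    · have : Nat.dist u.2.val v.2.val = 1 := pathGraph_adj_dist h1
      have t1 := Nat.dist.triangle_inequality u.2.val v.2.val z.2.val
      have t2 : Nat.dist u.1.val z.1.val = Nat.dist v.1.val z.1.val := by rw [h2]
      simp only [SimpleGraph.Walk.length_cons]
      omega

lemma grid_dist {m k : ℕ} (x y : Fin m × Fin k) :
    ((SimpleGraph.pathGraph m).boxProd (SimpleGraph.pathGraph k)).dist x y
      = Nat.dist x.1.val y.1.val + Nat.dist x.2.val y.2.val := by
  obtain ⟨a, b⟩ := x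
  obtain ⟨c, d⟩ := y
  apply le_antisymm
  · obtain ⟨w1, hw1⟩ := pathGraph_exists_walk m a c
    obtain ⟨w2, hw2⟩ := pathGraph_exists_walk k b d
    calc ((SimpleGraph.pathGraph m).boxProd (SimpleGraph.pathGraph k)).dist (a, b) (c, d)
        ≤ ((w1.boxProdLeft _ b).append (w2.boxProdRight _ c)).length := SimpleGraph.dist_le _
      _ = _ := by
          rw [SimpleGraph.Walk.length_append]
          exact congrArg₂ (· + ·) ((SimpleGraph.Walk.length_map _ w1).trans hw1)
            ((SimpleGraph.Walk.length_map _ w2).trans hw2)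
  · have hm : 0 < m := a.pos
    have hk : 0 < k := b.pos
    have hconn : ((SimpleGraph.pathGraph m).boxProd (SimpleGraph.pathGraph k)).Connected := by
      obtain ⟨m', rfl⟩ : ∃ m', m = m' + 1 := ⟨m - 1, by omega⟩
      obtain ⟨k', rfl⟩ : ∃ k', k = k' + 1 := ⟨k - 1, by omega⟩
      exact SimpleGraph.Connected.boxProd (SimpleGraph.pathGraph_connected m')
        (SimpleGraph.pathGraph_connected k')
    obtain ⟨w, hw⟩ := hconn.exists_walk_length_eq_dist (a, b) (c, d)
    calc Nat.dist a.val c.val + Nat.dist b.val d.val ≤ w.length := grid_walk_length_ge w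
      _ = _ := hw


namespace CupCore

variable {V : Type*} [DecidableEq V] {G : SimpleGraph V}

def moveConf (C : V → ℕ) (u v : V) : V → ℕ :=
  fun w => if w = u then 0 else if w = v then C u + C v else C w

lemma cupMove_mk {C : V → ℕ} (u v : V) (h1 : u ≠ v) (h2 : 1 ≤ C u) (h3 : 1 ≤ C v)
    (h4 : G.dist u v = C u) : CupMove G C (moveConf C u v) :=
  ⟨u, v, h1, h2, h3, h4, fun _ => rfl⟩

def InRange (L : ℕ) (x : ℕ → V) (v : V) : Prop := ∃ i, i < L ∧ v = x i

lemma inRange_mk {L : ℕ} {x : ℕ → V} {v : V} (i : ℕ) (hi : i < L) (h : v = x i) :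
    InRange L x v := ⟨i, hi, h⟩

open Classical in
noncomputable def gconf (C : V → ℕ) (L : ℕ) (x : ℕ → V) (tgt : V) (N : ℕ) : V → ℕ :=
  fun v => if v = tgt then N else if InRange L x v then 0 else C v

open Classical in
lemma gconf_eval (C : V → ℕ) (L : ℕ) (x : ℕ → V) (tgt : V) (N : ℕ) (v : V) :
    gconf C L x tgt N v = if v = tgt then N else if InRange L x v then 0 else C v := rfl

open Classical in
theorem gatherA : ∀ (L : ℕ), 1 ≤ L → ∀ (x : ℕ → V) (C : V → ℕ),
    (∀ i j, i < L → j < L → x i = x j → i = j) →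
    (∀ i j, i < L → j < L → G.dist (x i) (x j) = Nat.dist i j) →
    (∀ i, i < L → C (x i) = 1) →
    Relation.ReflTransGen (CupMove G) C (gconf C L x (x 0) L) := by
  intro L
  induction L with
  | zero => omega
  | succ L ih =>
    intro _ x C hinj hiso hones
    have hgeval : ∀ tgt N v, gconf C (L + 1) x tgt N v
        = if v = tgt then N else if InRange (L + 1) x v then 0 else C v := fun _ _ _ => rfl
    rcases Nat.eq_zero_or_pos L with rfl | hLpos
    · have heq : gconf C 1 x (x 0) 1 = C := by
        funext v
        rw [hgeval]
        by_cases h1 : v = x 0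
        · rw [if_pos h1, h1, hones 0 (by omega)]
        · rw [if_neg h1, if_neg]
          rintro ⟨i, hi, rfl⟩
          have : i = 0 := by omega
          subst this
          exact h1 rfl
      rw [heq]
    · have hinj' : ∀ i j, i < L → j < L → x (L - i) = x (L - j) → i = j := by
        intro i j hi hj h
        have := hinj (L - i) (L - j) (by omega) (by omega) h
        omega
      have hiso' : ∀ i j, i < L → j < L → G.dist (x (L - i)) (x (L - j)) = Nat.dist i j := by
        intro i j hi hj
        rw [hiso (L - i) (L - j) (by omega) (by omega)]
        simp only [Nat.dist]; omega
      have hones' : ∀ i, i < L → C (x (L - i)) = 1 := fun i hi => hones (L - i) (by omega)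
      have step1 := ih hLpos (fun i => x (L - i)) C hinj' hiso' hones'
      simp only [Nat.sub_zero] at step1
      set C₁ := gconf C L (fun i => x (L - i)) (x L) L with hC₁
      have hxL0 : x L ≠ x 0 := by
        intro h
        have := hinj L 0 (by omega) (by omega) h
        omega
      have hnotrange0 : ¬ InRange L (fun i => x (L - i)) (x 0) := by
        rintro ⟨i, hi, h⟩
        have := hinj 0 (L - i) (by omega) (by omega) h
        omega
      have hC₁eval : ∀ v, C₁ v
          = if v = x L then L else if InRange L (fun i => x (L - i)) v then 0 else C v :=
        fun v => rfl
      have hC₁xL : C₁ (x L) = L := by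
        rw [hC₁eval, if_pos rfl]
      have hC₁x0 : C₁ (x 0) = 1 := by
        rw [hC₁eval, if_neg hxL0.symm, if_neg hnotrange0]
        exact hones 0 (by omega)
      have hmove : CupMove G C₁ (moveConf C₁ (x L) (x 0)) := by
        apply cupMove_mk _ _ hxL0 (by rw [hC₁xL]; omega) (by rw [hC₁x0])
        rw [hiso L 0 (by omega) (by omega), hC₁xL]
        simp [Nat.dist]
      have hmeval : ∀ v, moveConf C₁ (x L) (x 0) v
          = if v = x L then 0 else if v = x 0 then C₁ (x L) + C₁ (x 0) else C₁ v :=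
        fun v => rfl
      have hfinal : moveConf C₁ (x L) (x 0) = gconf C (L + 1) x (x 0) (L + 1) := by
        funext v
        rw [hmeval, hgeval]
        by_cases hvL : v = x L
        · rw [if_pos hvL, if_neg (by rw [hvL]; exact hxL0)]
          rw [if_pos (inRange_mk L (by omega) hvL)]
        · rw [if_neg hvL]
          by_cases hv0 : v = x 0
          · rw [if_pos hv0, if_pos hv0, hC₁xL, hC₁x0]
          · rw [if_neg hv0, if_neg hv0, hC₁eval, if_neg hvL]
            by_cases hex : InRange (L + 1) x v
            · obtain ⟨i, hi, rfl⟩ := hex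
              have hi1 : 1 ≤ i := by
                rcases Nat.eq_zero_or_pos i with rfl | h
                · exact absurd rfl hv0
                · exact h
              have hiL : i < L := by
                rcases Nat.lt_or_ge i L with h | h
                · exact h
                · have : i = L := by omega
                  subst this; exact absurd rfl hvL
              rw [if_pos (inRange_mk (L - i) (by omega) (by congr 1; omega)),
                if_pos (inRange_mk i (by omega) rfl)]
            · rw [if_neg, if_neg hex]
              rintro ⟨i, hi, h⟩
              exact hex (inRange_mk (L - i) (by omega) h)
      exact step1.trans (hfinal ▸ Relation.ReflTransGen.single hmove)

open Classical in
theorem gatherB (L : ℕ) (hL : 1 ≤ L) (x : ℕ → V) (g : ℕ) (hg : g < L)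
    (hinj : ∀ i j, i < L → j < L → x i = x j → i = j)
    (hiso : ∀ i j, i < L → j < L → G.dist (x i) (x j) = Nat.dist i j)
    (C : V → ℕ) (hones : ∀ i, i < L → C (x i) = 1) :
    Relation.ReflTransGen (CupMove G) C (gconf C L x (x g) L) := by
  have hD₁ : Relation.ReflTransGen (CupMove G) C
      (fun v => if v = x g then g + 1 else if InRange g x v then 0 else C v) := by
    rcases Nat.eq_zero_or_pos g with rfl | hgpos
    · have heq : (fun v => if v = x 0 then 0 + 1 else
          if InRange 0 x v then 0 else C v) = C := by
        funext v
        by_cases hv : v = x 0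
        · rw [if_pos hv, hv, hones 0 hg]
        · rw [if_neg hv, if_neg (by rintro ⟨i, hi, _⟩; omega)]
      rw [heq]
    · have hE := gatherA g hgpos x C (fun i j hi hj => hinj i j (by omega) (by omega))
        (fun i j hi hj => hiso i j (by omega) (by omega)) (fun i hi => hones i (by omega))
      set E := gconf C g x (x 0) g with hEdef
      have hEeval : ∀ v, E v
          = if v = x 0 then g else if InRange g x v then 0 else C v := fun v => rfl
      have hx0g : x 0 ≠ x g := by
        intro h; have := hinj 0 g (by omega) hg h; omega
      have hxg_notin : ¬ InRange g x (x g) := by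
        rintro ⟨i, hi, h⟩; have := hinj g i hg (by omega) h; omega
      have hExg : E (x g) = 1 := by
        rw [hEeval, if_neg (fun h => hx0g h.symm), if_neg hxg_notin]
        exact hones g hg
      have hEx0 : E (x 0) = g := by rw [hEeval, if_pos rfl]
      have hmv : CupMove G E (moveConf E (x 0) (x g)) := by
        apply cupMove_mk _ _ hx0g (by rw [hEx0]; omega) (by rw [hExg])
        rw [hiso 0 g (by omega) hg, hEx0]
        simp [Nat.dist]
      have heq : moveConf E (x 0) (x g)
          = (fun v => if v = x g then g + 1 else if InRange g x v then 0 else C v) := by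
        funext v
        have hm : moveConf E (x 0) (x g) v
            = if v = x 0 then 0 else if v = x g then E (x 0) + E (x g) else E v := rfl
        rw [hm]
        by_cases hv0 : v = x 0
        · rw [if_pos hv0, if_neg (by rw [hv0]; exact hx0g),
            if_pos (inRange_mk 0 hgpos hv0)]
        · rw [if_neg hv0]
          by_cases hvg : v = x g
          · rw [if_pos hvg, if_pos hvg, hEx0, hExg]
          · rw [if_neg hvg, if_neg hvg, hEeval, if_neg hv0]
      exact hE.trans (heq ▸ Relation.ReflTransGen.single hmv)
  set D₁ := (fun v => if v = x g then g + 1 else if InRange g x v then 0 else C v)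
    with hD₁def
  have hD₁eval : ∀ v, D₁ v
      = if v = x g then g + 1 else if InRange g x v then 0 else C v := fun v => rfl
  have hgoaleval : ∀ v, gconf C L x (x g) L v
      = if v = x g then L else if InRange L x v then 0 else C v := fun v => rfl
  rcases Nat.lt_or_ge (g + 1) L with hgL | hgL
  · set R := L - 1 - g with hRdef
    have hRpos : 1 ≤ R := by omega
    have hinj'' : ∀ i j, i < R → j < R → x (L - 1 - i) = x (L - 1 - j) → i = j := by
      intro i j hi hj h
      have := hinj (L - 1 - i) (L - 1 - j) (by omega) (by omega) h
      omega
    have hiso'' : ∀ i j, i < R → j < R →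
        G.dist (x (L - 1 - i)) (x (L - 1 - j)) = Nat.dist i j := by
      intro i j hi hj
      rw [hiso (L - 1 - i) (L - 1 - j) (by omega) (by omega)]
      simp only [Nat.dist]; omega
    have hones'' : ∀ i, i < R → D₁ (x (L - 1 - i)) = 1 := by
      intro i hi
      rw [hD₁eval, if_neg, if_neg]
      · exact hones (L - 1 - i) (by omega)
      · rintro ⟨i', hi', h⟩
        have := hinj (L - 1 - i) i' (by omega) (by omega) h
        omega
      · intro h
        have := hinj (L - 1 - i) g (by omega) hg h
        omega
    have hF := gatherA R hRpos (fun i => x (L - 1 - i)) D₁ hinj'' hiso'' hones''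
    simp only [Nat.sub_zero] at hF
    set F := gconf D₁ R (fun i => x (L - 1 - i)) (x (L - 1)) R with hFdef
    have hFeval : ∀ v, F v = if v = x (L - 1) then R
        else if InRange R (fun i => x (L - 1 - i)) v then 0 else D₁ v := fun v => rfl
    have hxL1g : x (L - 1) ≠ x g := by
      intro h; have := hinj (L - 1) g (by omega) hg h; omega
    have hFxL1 : F (x (L - 1)) = R := by rw [hFeval, if_pos rfl]
    have hFxg : F (x g) = g + 1 := by
      rw [hFeval, if_neg (fun h => hxL1g h.symm), if_neg, hD₁eval, if_pos rfl]
      rintro ⟨i, hi, h⟩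
      have := hinj g (L - 1 - i) (by omega) (by omega) h
      omega
    have hmv : CupMove G F (moveConf F (x (L - 1)) (x g)) := by
      apply cupMove_mk _ _ hxL1g (by rw [hFxL1]; omega) (by rw [hFxg]; omega)
      rw [hiso (L - 1) g (by omega) hg, hFxL1]
      simp only [Nat.dist]; omega
    have heq : moveConf F (x (L - 1)) (x g) = gconf C L x (x g) L := by
      funext v
      have hm : moveConf F (x (L - 1)) (x g) v
          = if v = x (L - 1) then 0 else if v = x g then F (x (L - 1)) + F (x g) else F v := rfl
      rw [hm, hgoaleval]
      by_cases hvL1 : v = x (L - 1)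
      · rw [if_pos hvL1, if_neg (by rw [hvL1]; exact hxL1g),
          if_pos (inRange_mk (L - 1) (by omega) hvL1)]
      · rw [if_neg hvL1]
        by_cases hvg : v = x g
        · rw [if_pos hvg, if_pos hvg, hFxL1, hFxg]; omega
        · rw [if_neg hvg, if_neg hvg, hFeval, if_neg hvL1]
          by_cases hex2 : InRange R (fun i => x (L - 1 - i)) v
          · obtain ⟨i, hi, rfl⟩ := hex2
            rw [if_pos (inRange_mk i hi rfl), if_pos (inRange_mk (L - 1 - i) (by omega) rfl)]
          · rw [if_neg hex2, hD₁eval, if_neg hvg]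
            by_cases hex1 : InRange g x v
            · obtain ⟨i, hi, rfl⟩ := hex1
              rw [if_pos (inRange_mk i hi rfl), if_pos (inRange_mk i (by omega) rfl)]
            · rw [if_neg hex1, if_neg]
              rintro ⟨i, hi, rfl⟩
              rcases Nat.lt_trichotomy i g with h | h | h
              · exact hex1 (inRange_mk i h rfl)
              · exact hvg (by rw [h])
              · exact hex2 (inRange_mk (L - 1 - i) (by omega) (by congr 1; omega))
    exact hD₁.trans (hF.trans (heq ▸ Relation.ReflTransGen.single hmv))
  · have heq : D₁ = gconf C L x (x g) L := by
      funext v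
      rw [hD₁eval, hgoaleval]
      by_cases hvg : v = x g
      · rw [if_pos hvg, if_pos hvg]; omega
      · rw [if_neg hvg, if_neg hvg]
        by_cases hex : InRange g x v
        · obtain ⟨i, hi, rfl⟩ := hex
          rw [if_pos (inRange_mk i hi rfl), if_pos (inRange_mk i (by omega) rfl)]
        · rw [if_neg hex, if_neg]
          rintro ⟨i, hi, rfl⟩
          rcases Nat.lt_trichotomy i g with h | h | h
          · exact hex (inRange_mk i h rfl)
          · exact hvg (by rw [h])
          · omega
    exact heq ▸ hD₁

open Classical in
theorem dump (L : ℕ) (hL : 1 ≤ L) (x : ℕ → V) (g : ℕ) (hg : g < L)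
    (hinj : ∀ i j, i < L → j < L → x i = x j → i = j)
    (hiso : ∀ i j, i < L → j < L → G.dist (x i) (x j) = Nat.dist i j)
    (t : V) (htx : ∀ i, i < L → x i ≠ t) (hgt : G.dist (x g) t = L)
    (C : V → ℕ) (hones : ∀ i, i < L → C (x i) = 1) (hCt : 1 ≤ C t) :
    Relation.ReflTransGen (CupMove G) C (gconf C L x t (C t + L)) := by
  have hE := gatherB L hL x g hg hinj hiso C hones
  set E := gconf C L x (x g) L with hEdef
  have hEeval : ∀ v, E v
      = if v = x g then L else if InRange L x v then 0 else C v := by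
    intro v; rw [hEdef, gconf_eval]
  have hExg : E (x g) = L := by rw [hEeval, if_pos rfl]
  have hEt : E t = C t := by
    rw [hEeval, if_neg (fun h => htx g hg h.symm), if_neg]
    rintro ⟨i, hi, h⟩
    exact htx i hi h.symm
  have hmv : CupMove G E (moveConf E (x g) t) := by
    apply cupMove_mk _ _ (htx g hg) (by rw [hExg]; omega) (by rw [hEt]; omega)
    rw [hgt, hExg]
  have heq : moveConf E (x g) t = gconf C L x t (C t + L) := by
    funext v
    have hm : moveConf E (x g) t v
        = if v = x g then 0 else if v = t then E (x g) + E t else E v := rfl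
    have hgoal : gconf C L x t (C t + L) v
        = if v = t then C t + L else if InRange L x v then 0 else C v := gconf_eval ..
    rw [hm, hgoal]
    by_cases hvg : v = x g
    · rw [if_pos hvg, if_neg (by rw [hvg]; exact htx g hg),
        if_pos (inRange_mk g hg hvg)]
    · rw [if_neg hvg]
      by_cases hvt : v = t
      · rw [if_pos hvt, if_pos hvt, hExg, hEt]; omega
      · rw [if_neg hvt, if_neg hvt, hEeval, if_neg hvg]
  exact hE.trans (heq ▸ Relation.ReflTransGen.single hmv)

open Classical in
noncomputable def confP (t : V) (P : V → Prop) (N : ℕ) : V → ℕ :=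
  fun v => if v = t then N else if P v then 0 else 1

open Classical in
lemma confP_eval (t : V) (P : V → Prop) (N : ℕ) (v : V) :
    confP t P N v = if v = t then N else if P v then 0 else 1 := rfl

open Classical in
theorem stepP (t : V) (P : V → Prop) (N : ℕ) (hN : 1 ≤ N)
    (L : ℕ) (hL : 1 ≤ L) (x : ℕ → V) (g : ℕ) (hg : g < L)
    (hinj : ∀ i j, i < L → j < L → x i = x j → i = j)
    (hiso : ∀ i j, i < L → j < L → G.dist (x i) (x j) = Nat.dist i j)
    (htx : ∀ i, i < L → x i ≠ t) (hgt : G.dist (x g) t = L)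
    (hdisj : ∀ i, i < L → ¬ P (x i)) :
    Relation.ReflTransGen (CupMove G) (confP t P N)
      (confP t (fun v => P v ∨ InRange L x v) (N + L)) := by
  have hCeval : ∀ v, confP t P N v = if v = t then N else if P v then 0 else 1 :=
    fun v => confP_eval ..
  have hones : ∀ i, i < L → confP t P N (x i) = 1 := by
    intro i hi
    rw [hCeval, if_neg (htx i hi), if_neg (hdisj i hi)]
  have hCt : confP t P N t = N := by rw [hCeval, if_pos rfl]
  have hd := dump L hL x g hg hinj hiso t htx hgt (confP t P N) hones (by rw [hCt]; omega)
  have heq : gconf (confP t P N) L x t (confP t P N t + L)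
      = confP t (fun v => P v ∨ InRange L x v) (N + L) := by
    funext v
    have h1 : gconf (confP t P N) L x t (confP t P N t + L) v
        = if v = t then confP t P N t + L
          else if InRange L x v then 0 else confP t P N v := gconf_eval ..
    have h2 := confP_eval t (fun v => P v ∨ InRange L x v) (N + L) v
    rw [h1, h2]
    by_cases hvt : v = t
    · rw [if_pos hvt, if_pos hvt, hCt]
    · rw [if_neg hvt, if_neg hvt]
      by_cases hex : InRange L x v
      · rw [if_pos hex, if_pos (Or.inr hex)]
      · rw [if_neg hex, hCeval, if_neg hvt]
        by_cases hP : P v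
        · rw [if_pos hP, if_pos (Or.inl hP)]
        · rw [if_neg hP, if_neg]
          rintro (h | h)
          · exact hP h
          · exact hex h
  exact heq ▸ hd

open Classical in
lemma confP_congr (t : V) (P Q : V → Prop) (N : ℕ) (h : ∀ v, P v ↔ Q v) :
    confP t P N = confP t Q N := by
  funext v
  rw [confP_eval, confP_eval]
  by_cases hvt : v = t
  · rw [if_pos hvt, if_pos hvt]
  · rw [if_neg hvt, if_neg hvt]
    by_cases hP : P v
    · rw [if_pos hP, if_pos ((h v).mp hP)]
    · rw [if_neg hP, if_neg (fun hq => hP ((h v).mpr hq))]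

open Classical in
lemma cupMove_sum [Fintype V] {C C' : V → ℕ} (h : CupMove G C C') :
    ∑ v, C' v = ∑ v, C v := by
  obtain ⟨u, v, hne, h1, h2, hd, hw⟩ := h
  have hC' : C' = Function.update (Function.update C u 0) v (C u + C v) := by
    funext w
    rw [hw w, Function.update_apply, Function.update_apply]
    by_cases hwu : w = u
    · rw [if_pos hwu, if_neg (by rw [hwu]; exact hne), if_pos hwu]
    · rw [if_neg hwu]
      by_cases hwv : w = v
      · rw [if_pos hwv, if_pos hwv]
      · rw [if_neg hwv, if_neg hwv, if_neg hwu]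
  have hu : u ∈ Finset.univ.erase v := Finset.mem_erase.mpr ⟨hne, Finset.mem_univ u⟩
  have hu' : u ∈ Finset.univ \ {v} := by rw [← Finset.erase_eq]; exact hu
  rw [hC', Finset.sum_update_of_mem (Finset.mem_univ v),
    Finset.sum_update_of_mem hu']
  have e1 : ∑ w, C w = C v + ∑ w ∈ Finset.univ.erase v, C w :=
    (Finset.add_sum_erase _ C (Finset.mem_univ v)).symm
  have e2 : ∑ w ∈ Finset.univ.erase v, C w
      = C u + ∑ w ∈ (Finset.univ.erase v).erase u, C w :=
    (Finset.add_sum_erase _ C hu).symm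
  rw [Finset.erase_eq] at e1
  rw [Finset.erase_eq, Finset.erase_eq] at e2
  omega

lemma rtg_sum [Fintype V] {C D : V → ℕ}
    (h : Relation.ReflTransGen (CupMove G) C D) : ∑ v, D v = ∑ v, C v := by
  induction h with
  | refl => rfl
  | tail _ hstep ih => rw [cupMove_sum hstep]; exact ih

open Classical in
theorem closedQuadrant (t : V) (M K : ℕ) (f : ℕ → ℕ → V)
    (hft : ∀ u v, 1 ≤ u → u ≤ M → v ≤ K → f u v ≠ t)
    (hfd : ∀ u v u' v', 1 ≤ u → u ≤ M → v ≤ K → 1 ≤ u' → u' ≤ M → v' ≤ K →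
        G.dist (f u v) (f u' v') = Nat.dist u u' + Nat.dist v v')
    (hfdt : ∀ u v, 1 ≤ u → u ≤ M → v ≤ K → G.dist (f u v) t = u + v)
    (P : V → Prop) (N : ℕ) (hN : 1 ≤ N)
    (hdisj : ∀ u v, 1 ≤ u → u ≤ M → v ≤ K → ¬ P (f u v)) :
    ∃ N', 1 ≤ N' ∧ Relation.ReflTransGen (CupMove G) (confP t P N)
      (confP t (fun z => P z ∨ ∃ u v, 1 ≤ u ∧ u ≤ M ∧ v ≤ K ∧ z = f u v) N') := by
  have hinjf : ∀ u v u' v', 1 ≤ u → u ≤ M → v ≤ K → 1 ≤ u' → u' ≤ M → v' ≤ K →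
      f u v = f u' v' → u = u' ∧ v = v' := by
    intro u v u' v' h1 h2 h3 h4 h5 h6 heq
    have h0 := hfd u v u' v' h1 h2 h3 h4 h5 h6
    rw [heq, SimpleGraph.dist_self] at h0
    simp only [Nat.dist] at h0
    omega
  rcases Nat.eq_zero_or_pos M with rfl | hM
  · refine ⟨N, hN, ?_⟩
    rw [confP_congr t (fun z => P z ∨ ∃ u v, 1 ≤ u ∧ u ≤ 0 ∧ v ≤ K ∧ z = f u v) P N
      (by
        intro z
        constructor
        · rintro (h | ⟨u, v, hu, hu0, _, _⟩)
          · exact h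
          · omega
        · exact Or.inl)]
  rcases le_or_gt M (K + 1) with hMK | hMK
  · -- rows: for u = 1..M the full row f u (0..K)
    have claim : ∀ w, w ≤ M → Relation.ReflTransGen (CupMove G) (confP t P N)
        (confP t (fun z => P z ∨ ∃ u v, 1 ≤ u ∧ u ≤ w ∧ v ≤ K ∧ z = f u v)
          (N + w * (K + 1))) := by
      intro w
      induction w with
      | zero =>
        intro _
        rw [show N + 0 * (K + 1) = N by omega]
        rw [confP_congr t (fun z => P z ∨ ∃ u v, 1 ≤ u ∧ u ≤ 0 ∧ v ≤ K ∧ z = f u v) P N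
          (by
            intro z
            constructor
            · rintro (h | ⟨u, v, hu, hu0, _, _⟩)
              · exact h
              · omega
            · exact Or.inl)]
      | succ w ih =>
        intro hw
        have hw' : w ≤ M := by omega
        have hu1 : 1 ≤ w + 1 := by omega
        have huM : w + 1 ≤ M := hw
        have hstep := stepP t
          (fun z => P z ∨ ∃ u v, 1 ≤ u ∧ u ≤ w ∧ v ≤ K ∧ z = f u v)
          (N + w * (K + 1)) (by omega)
          (K + 1) (by omega) (fun i => f (w + 1) i) (K + 1 - (w + 1)) (by omega)
          (by
            intro i j hi hj h
            exact (hinjf (w + 1) i (w + 1) j hu1 huM (by omega) hu1 huM (by omega) h).2)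
          (by
            intro i j hi hj
            rw [hfd (w + 1) i (w + 1) j hu1 huM (by omega) hu1 huM (by omega)]
            simp only [Nat.dist]; omega)
          (fun i hi => hft (w + 1) i hu1 huM (by omega))
          (by
            rw [hfdt (w + 1) (K + 1 - (w + 1)) hu1 huM (by omega)]
            omega)
          (by
            rintro i hi (h | ⟨u, v, h1, h2, h3, h4⟩)
            · exact hdisj (w + 1) i hu1 huM (by omega) h
            · have := hinjf u v (w + 1) i h1 (by omega) h3 hu1 huM (by omega) h4.symm
              omega)
        rw [show N + w * (K + 1) + (K + 1) = N + (w + 1) * (K + 1) by ring] at hstep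
        rw [confP_congr t _
          (fun z => P z ∨ ∃ u v, 1 ≤ u ∧ u ≤ w + 1 ∧ v ≤ K ∧ z = f u v)
          (N + (w + 1) * (K + 1))
          (by
            intro z
            constructor
            · rintro ((h | ⟨u, v, h1, h2, h3, h4⟩) | ⟨i, hi, h⟩)
              · exact Or.inl h
              · exact Or.inr ⟨u, v, h1, by omega, h3, h4⟩
              · exact Or.inr ⟨w + 1, i, hu1, le_refl _, by omega, h⟩
            · rintro (h | ⟨u, v, h1, h2, h3, h4⟩)
              · exact Or.inl (Or.inl h)
              · rcases Nat.lt_or_ge u (w + 1) with h5 | h5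
                · exact Or.inl (Or.inr ⟨u, v, h1, by omega, h3, h4⟩)
                · refine Or.inr ⟨v, by omega, ?_⟩
                  rw [h4]
                  congr 1
                  omega)] at hstep
        exact (ih hw').trans hstep
    exact ⟨N + M * (K + 1), by omega, claim M (le_refl M)⟩
  · -- columns: for v = 0..K the full column f (1..M) v
    have claim : ∀ w, w ≤ K + 1 → Relation.ReflTransGen (CupMove G) (confP t P N)
        (confP t (fun z => P z ∨ ∃ u v, 1 ≤ u ∧ u ≤ M ∧ v < w ∧ z = f u v)
          (N + w * M)) := by
      intro w
      induction w with
      | zero =>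
        intro _
        rw [show N + 0 * M = N by omega]
        rw [confP_congr t (fun z => P z ∨ ∃ u v, 1 ≤ u ∧ u ≤ M ∧ v < 0 ∧ z = f u v) P N
          (by
            intro z
            constructor
            · rintro (h | ⟨u, v, hu, hu0, hv, _⟩)
              · exact h
              · omega
            · exact Or.inl)]
      | succ w ih =>
        intro hw
        have hw' : w ≤ K + 1 := by omega
        have hwK : w ≤ K := by omega
        have hstep := stepP t
          (fun z => P z ∨ ∃ u v, 1 ≤ u ∧ u ≤ M ∧ v < w ∧ z = f u v)
          (N + w * M) (by omega)
          M (by omega) (fun i => f (1 + i) w) (M - w - 1) (by omega)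
          (by
            intro i j hi hj h
            have := hinjf (1 + i) w (1 + j) w (by omega) (by omega) hwK
              (by omega) (by omega) hwK h
            omega)
          (by
            intro i j hi hj
            rw [hfd (1 + i) w (1 + j) w (by omega) (by omega) hwK (by omega) (by omega) hwK]
            simp only [Nat.dist]; omega)
          (fun i hi => hft (1 + i) w (by omega) (by omega) hwK)
          (by
            rw [hfdt (1 + (M - w - 1)) w (by omega) (by omega) hwK]
            omega)
          (by
            rintro i hi (h | ⟨u, v, h1, h2, h3, h4⟩)
            · exact hdisj (1 + i) w (by omega) (by omega) hwK h
            · have := hinjf u v (1 + i) w h1 h2 (by omega) (by omega) (by omega) hwK h4.symm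
              omega)
        rw [show N + w * M + M = N + (w + 1) * M by ring] at hstep
        rw [confP_congr t _
          (fun z => P z ∨ ∃ u v, 1 ≤ u ∧ u ≤ M ∧ v < w + 1 ∧ z = f u v)
          (N + (w + 1) * M)
          (by
            intro z
            constructor
            · rintro ((h | ⟨u, v, h1, h2, h3, h4⟩) | ⟨i, hi, h⟩)
              · exact Or.inl h
              · exact Or.inr ⟨u, v, h1, h2, by omega, h4⟩
              · exact Or.inr ⟨1 + i, w, by omega, by omega, by omega, h⟩
            · rintro (h | ⟨u, v, h1, h2, h3, h4⟩)
              · exact Or.inl (Or.inl h)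
              · rcases Nat.lt_or_ge v w with h5 | h5
                · exact Or.inl (Or.inr ⟨u, v, h1, h2, h5, h4⟩)
                · have hvw : v = w := by omega
                  refine Or.inr ⟨u - 1, by omega, ?_⟩
                  rw [h4, hvw]
                  congr 1
                  omega)] at hstep
        exact (ih hw').trans hstep
    have h := claim (K + 1) (le_refl _)
    rw [confP_congr t _
      (fun z => P z ∨ ∃ u v, 1 ≤ u ∧ u ≤ M ∧ v ≤ K ∧ z = f u v) (N + (K + 1) * M)
      (by
        intro z
        constructor
        · rintro (h | ⟨u, v, h1, h2, h3, h4⟩)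
          · exact Or.inl h
          · exact Or.inr ⟨u, v, h1, h2, by omega, h4⟩
        · rintro (h | ⟨u, v, h1, h2, h3, h4⟩)
          · exact Or.inl h
          · exact Or.inr ⟨u, v, h1, h2, by omega, h4⟩)] at h
    exact ⟨N + (K + 1) * M, by omega, h⟩

end CupCore


open CupCore in
set_option maxHeartbeats 2000000 in
theorem grid_stackable (m k : ℕ) (hm : 1 ≤ m) (hk : 1 ≤ k) :
    IsStackable ((SimpleGraph.pathGraph m).boxProd (SimpleGraph.pathGraph k)) := by
  intro r
  obtain ⟨a, b⟩ := r
  set G := (SimpleGraph.pathGraph m).boxProd (SimpleGraph.pathGraph k) with hG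
  set t : Fin m × Fin k := (a, b) with ht
  have ha : a.val < m := a.isLt
  have hb : b.val < k := b.isLt
  have hdist : ∀ x y : Fin m × Fin k,
      G.dist x y = Nat.dist x.1.val y.1.val + Nat.dist x.2.val y.2.val := by
    intro x y
    obtain ⟨x1, x2⟩ := x
    obtain ⟨y1, y2⟩ := y
    exact grid_dist (x1, x2) (y1, y2)
  -- the four quadrant embeddings
  set f₁ : ℕ → ℕ → Fin m × Fin k := fun u v =>
    (⟨a.val - u, lt_of_le_of_lt (Nat.sub_le _ _) a.isLt⟩,
     ⟨min (b.val + v) (k - 1), lt_of_le_of_lt (min_le_right _ _) (by omega)⟩) with hf₁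
  set f₂ : ℕ → ℕ → Fin m × Fin k := fun u v =>
    (⟨min (a.val + v) (m - 1), lt_of_le_of_lt (min_le_right _ _) (by omega)⟩,
     ⟨min (b.val + u) (k - 1), lt_of_le_of_lt (min_le_right _ _) (by omega)⟩) with hf₂
  set f₃ : ℕ → ℕ → Fin m × Fin k := fun u v =>
    (⟨min (a.val + u) (m - 1), lt_of_le_of_lt (min_le_right _ _) (by omega)⟩,
     ⟨b.val - v, lt_of_le_of_lt (Nat.sub_le _ _) b.isLt⟩) with hf₃
  set f₄ : ℕ → ℕ → Fin m × Fin k := fun u v =>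
    (⟨a.val - v, lt_of_le_of_lt (Nat.sub_le _ _) a.isLt⟩,
     ⟨b.val - u, lt_of_le_of_lt (Nat.sub_le _ _) b.isLt⟩) with hf₄
  -- region coordinate bounds
  have hreg₁ : ∀ u v, 1 ≤ u → u ≤ a.val → v ≤ (k - 1 - b.val) →
      (f₁ u v).1.val < a.val ∧ b.val ≤ (f₁ u v).2.val ∧
      (f₁ u v).1.val = a.val - u ∧ (f₁ u v).2.val = b.val + v := by
    intro u v h1 h2 h3
    refine ⟨?_, ?_, ?_, ?_⟩
    · show a.val - u < a.val; omega
    · show b.val ≤ min (b.val + v) (k - 1); omega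
    · rfl
    · show min (b.val + v) (k - 1) = b.val + v; omega
  have hreg₂ : ∀ u v, 1 ≤ u → u ≤ (k - 1 - b.val) → v ≤ (m - 1 - a.val) →
      a.val ≤ (f₂ u v).1.val ∧ b.val < (f₂ u v).2.val ∧
      (f₂ u v).1.val = a.val + v ∧ (f₂ u v).2.val = b.val + u := by
    intro u v h1 h2 h3
    refine ⟨?_, ?_, ?_, ?_⟩
    · show a.val ≤ min (a.val + v) (m - 1); omega
    · show b.val < min (b.val + u) (k - 1); omega
    · show min (a.val + v) (m - 1) = a.val + v; omega
    · show min (b.val + u) (k - 1) = b.val + u; omega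
  have hreg₃ : ∀ u v, 1 ≤ u → u ≤ (m - 1 - a.val) → v ≤ b.val →
      a.val < (f₃ u v).1.val ∧ (f₃ u v).2.val ≤ b.val ∧
      (f₃ u v).1.val = a.val + u ∧ (f₃ u v).2.val = b.val - v := by
    intro u v h1 h2 h3
    refine ⟨?_, ?_, ?_, ?_⟩
    · show a.val < min (a.val + u) (m - 1); omega
    · show b.val - v ≤ b.val; omega
    · show min (a.val + u) (m - 1) = a.val + u; omega
    · rfl
  have hreg₄ : ∀ u v, 1 ≤ u → u ≤ b.val → v ≤ a.val →
      (f₄ u v).1.val ≤ a.val ∧ (f₄ u v).2.val < b.val ∧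
      (f₄ u v).1.val = a.val - v ∧ (f₄ u v).2.val = b.val - u := by
    intro u v h1 h2 h3
    refine ⟨?_, ?_, ?_, ?_⟩
    · show a.val - v ≤ a.val; omega
    · show b.val - u < b.val; omega
    · rfl
    · rfl
  have htne : ∀ z : Fin m × Fin k, (z.1.val ≠ a.val ∨ z.2.val ≠ b.val) → z ≠ t := by
    intro z h hz
    rw [hz] at h
    rcases h with h | h <;> exact h rfl
  -- quadrant 1 (NE)
  obtain ⟨N₁, hN₁, hrun₁⟩ := closedQuadrant (G := G) t a.val (k - 1 - b.val) f₁
    (by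
      intro u v h1 h2 h3
      obtain ⟨c1, c2, c3, c4⟩ := hreg₁ u v h1 h2 h3
      exact htne _ (Or.inl (by omega)))
    (by
      intro u v u' v' h1 h2 h3 h4 h5 h6
      obtain ⟨_, _, c3, c4⟩ := hreg₁ u v h1 h2 h3
      obtain ⟨_, _, c3', c4'⟩ := hreg₁ u' v' h4 h5 h6
      rw [hdist, c3, c4, c3', c4']
      simp only [Nat.dist]; omega)
    (by
      intro u v h1 h2 h3
      obtain ⟨_, _, c3, c4⟩ := hreg₁ u v h1 h2 h3
      rw [hdist, c3, c4]
      show (a.val - u).dist a.val + (b.val + v).dist b.val = u + v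
      simp only [Nat.dist]; omega)
    (fun _ => False) 1 le_rfl
    (fun u v _ _ _ h => h)
  set E₁ : Fin m × Fin k → Prop :=
    fun z => (fun _ => False) z ∨ ∃ u v, 1 ≤ u ∧ u ≤ a.val ∧ v ≤ (k - 1 - b.val) ∧ z = f₁ u v with hE₁
  have hE₁reg : ∀ z, E₁ z → z.1.val < a.val ∧ b.val ≤ z.2.val := by
    rintro z (h | ⟨u, v, h1, h2, h3, rfl⟩)
    · exact absurd h not_false
    · obtain ⟨c1, c2, _, _⟩ := hreg₁ u v h1 h2 h3
      exact ⟨c1, c2⟩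
  -- quadrant 2 (SE)
  obtain ⟨N₂, hN₂, hrun₂⟩ := closedQuadrant (G := G) t (k - 1 - b.val) (m - 1 - a.val) f₂
    (by
      intro u v h1 h2 h3
      obtain ⟨c1, c2, c3, c4⟩ := hreg₂ u v h1 h2 h3
      exact htne _ (Or.inr (by omega)))
    (by
      intro u v u' v' h1 h2 h3 h4 h5 h6
      obtain ⟨_, _, c3, c4⟩ := hreg₂ u v h1 h2 h3
      obtain ⟨_, _, c3', c4'⟩ := hreg₂ u' v' h4 h5 h6
      rw [hdist, c3, c4, c3', c4']
      simp only [Nat.dist]; omega)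
    (by
      intro u v h1 h2 h3
      obtain ⟨_, _, c3, c4⟩ := hreg₂ u v h1 h2 h3
      rw [hdist, c3, c4]
      show (a.val + v).dist a.val + (b.val + u).dist b.val = u + v
      simp only [Nat.dist]; omega)
    E₁ N₁ hN₁
    (by
      intro u v h1 h2 h3 hE
      obtain ⟨c1, c2, _, _⟩ := hreg₂ u v h1 h2 h3
      obtain ⟨d1, d2⟩ := hE₁reg _ hE
      omega)
  set E₂ : Fin m × Fin k → Prop :=
    fun z => E₁ z ∨ ∃ u v, 1 ≤ u ∧ u ≤ (k - 1 - b.val) ∧ v ≤ (m - 1 - a.val) ∧ z = f₂ u v with hE₂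
  have hE₂reg : ∀ z, E₂ z →
      (z.1.val < a.val ∧ b.val ≤ z.2.val) ∨ (a.val ≤ z.1.val ∧ b.val < z.2.val) := by
    rintro z (h | ⟨u, v, h1, h2, h3, rfl⟩)
    · exact Or.inl (hE₁reg z h)
    · obtain ⟨c1, c2, _, _⟩ := hreg₂ u v h1 h2 h3
      exact Or.inr ⟨c1, c2⟩
  -- quadrant 3 (SW)
  obtain ⟨N₃, hN₃, hrun₃⟩ := closedQuadrant (G := G) t (m - 1 - a.val) b.val f₃
    (by
      intro u v h1 h2 h3
      obtain ⟨c1, c2, c3, c4⟩ := hreg₃ u v h1 h2 h3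
      exact htne _ (Or.inl (by omega)))
    (by
      intro u v u' v' h1 h2 h3 h4 h5 h6
      obtain ⟨_, _, c3, c4⟩ := hreg₃ u v h1 h2 h3
      obtain ⟨_, _, c3', c4'⟩ := hreg₃ u' v' h4 h5 h6
      rw [hdist, c3, c4, c3', c4']
      simp only [Nat.dist]; omega)
    (by
      intro u v h1 h2 h3
      obtain ⟨_, _, c3, c4⟩ := hreg₃ u v h1 h2 h3
      rw [hdist, c3, c4]
      show (a.val + u).dist a.val + (b.val - v).dist b.val = u + v
      simp only [Nat.dist]; omega)
    E₂ N₂ hN₂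
    (by
      intro u v h1 h2 h3 hE
      obtain ⟨c1, c2, _, _⟩ := hreg₃ u v h1 h2 h3
      rcases hE₂reg _ hE with ⟨d1, d2⟩ | ⟨d1, d2⟩ <;> omega)
  set E₃ : Fin m × Fin k → Prop :=
    fun z => E₂ z ∨ ∃ u v, 1 ≤ u ∧ u ≤ (m - 1 - a.val) ∧ v ≤ b.val ∧ z = f₃ u v with hE₃
  have hE₃reg : ∀ z, E₃ z →
      (z.1.val < a.val ∧ b.val ≤ z.2.val) ∨ (a.val ≤ z.1.val ∧ b.val < z.2.val)
      ∨ (a.val < z.1.val ∧ z.2.val ≤ b.val) := by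
    rintro z (h | ⟨u, v, h1, h2, h3, rfl⟩)
    · rcases hE₂reg z h with h' | h'
      · exact Or.inl h'
      · exact Or.inr (Or.inl h')
    · obtain ⟨c1, c2, _, _⟩ := hreg₃ u v h1 h2 h3
      exact Or.inr (Or.inr ⟨c1, c2⟩)
  -- quadrant 4 (NW)
  obtain ⟨N₄, hN₄, hrun₄⟩ := closedQuadrant (G := G) t b.val a.val f₄
    (by
      intro u v h1 h2 h3
      obtain ⟨c1, c2, c3, c4⟩ := hreg₄ u v h1 h2 h3
      exact htne _ (Or.inr (by omega)))
    (by
      intro u v u' v' h1 h2 h3 h4 h5 h6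
      obtain ⟨_, _, c3, c4⟩ := hreg₄ u v h1 h2 h3
      obtain ⟨_, _, c3', c4'⟩ := hreg₄ u' v' h4 h5 h6
      rw [hdist, c3, c4, c3', c4']
      simp only [Nat.dist]; omega)
    (by
      intro u v h1 h2 h3
      obtain ⟨_, _, c3, c4⟩ := hreg₄ u v h1 h2 h3
      rw [hdist, c3, c4]
      show (a.val - v).dist a.val + (b.val - u).dist b.val = u + v
      simp only [Nat.dist]; omega)
    E₃ N₃ hN₃
    (by
      intro u v h1 h2 h3 hE
      obtain ⟨c1, c2, _, _⟩ := hreg₄ u v h1 h2 h3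
      rcases hE₃reg _ hE with ⟨d1, d2⟩ | ⟨d1, d2⟩ | ⟨d1, d2⟩ <;> omega)
  set E₄ : Fin m × Fin k → Prop :=
    fun z => E₃ z ∨ ∃ u v, 1 ≤ u ∧ u ≤ b.val ∧ v ≤ a.val ∧ z = f₄ u v with hE₄
  -- combine the four runs
  have hstart : (fun _ : Fin m × Fin k => (1 : ℕ)) = confP t (fun _ => False) 1 := by
    funext v
    rw [confP_eval]
    by_cases hv : v = t
    · rw [if_pos hv]
    · rw [if_neg hv, if_neg not_false]
  have hrun : Relation.ReflTransGen (CupMove G) (fun _ => 1) (confP t E₄ N₄) := by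
    rw [hstart]
    exact ((hrun₁.trans hrun₂).trans hrun₃).trans hrun₄
  -- coverage
  have hcover : ∀ z : Fin m × Fin k, z ≠ t → E₄ z := by
    intro z hz
    have hz1 : z.1.val < m := z.1.isLt
    have hz2 : z.2.val < k := z.2.isLt
    have hne : z.1.val ≠ a.val ∨ z.2.val ≠ b.val := by
      by_contra h
      push_neg at h
      exact hz (Prod.ext (Fin.ext h.1) (Fin.ext h.2))
    by_cases h1 : z.1.val < a.val
    · by_cases h2 : b.val ≤ z.2.val
      · -- NE
        refine Or.inl (Or.inl (Or.inl (Or.inr ⟨a.val - z.1.val, z.2.val - b.val,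
          by omega, by omega, by omega, ?_⟩)))
        refine Prod.ext (Fin.ext ?_) (Fin.ext ?_)
        · show z.1.val = a.val - (a.val - z.1.val); omega
        · show z.2.val = min (b.val + (z.2.val - b.val)) (k - 1); omega
      · -- NW
        refine Or.inr ⟨b.val - z.2.val, a.val - z.1.val, by omega, by omega, by omega, ?_⟩
        refine Prod.ext (Fin.ext ?_) (Fin.ext ?_)
        · show z.1.val = a.val - (a.val - z.1.val); omega
        · show z.2.val = b.val - (b.val - z.2.val); omega
    · by_cases h2 : b.val < z.2.val
      · -- SE
        refine Or.inl (Or.inl (Or.inr ⟨z.2.val - b.val, z.1.val - a.val,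
          by omega, by omega, by omega, ?_⟩))
        refine Prod.ext (Fin.ext ?_) (Fin.ext ?_)
        · show z.1.val = min (a.val + (z.1.val - a.val)) (m - 1); omega
        · show z.2.val = min (b.val + (z.2.val - b.val)) (k - 1); omega
      · by_cases h3 : a.val < z.1.val
        · -- SW
          refine Or.inl (Or.inr ⟨z.1.val - a.val, b.val - z.2.val,
            by omega, by omega, by omega, ?_⟩)
          refine Prod.ext (Fin.ext ?_) (Fin.ext ?_)
          · show z.1.val = min (a.val + (z.1.val - a.val)) (m - 1); omega
          · show z.2.val = b.val - (b.val - z.2.val); omega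
        · by_cases h4 : z.2.val < b.val
          · -- NW (z.1 = a)
            refine Or.inr ⟨b.val - z.2.val, a.val - z.1.val, by omega, by omega, by omega, ?_⟩
            refine Prod.ext (Fin.ext ?_) (Fin.ext ?_)
            · show z.1.val = a.val - (a.val - z.1.val); omega
            · show z.2.val = b.val - (b.val - z.2.val); omega
          · exfalso
            rcases hne with h | h <;> omega
  have hfinalconf : confP t E₄ N₄ = fun w => if w = t then N₄ else 0 := by
    funext w
    rw [confP_eval]
    by_cases hw : w = t
    · rw [if_pos hw, if_pos hw]
    · rw [if_neg hw, if_neg hw, if_pos (hcover w hw)]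
  have hsum : ∑ v : Fin m × Fin k, (1 : ℕ) = N₄ := by
    have h1 := rtg_sum hrun
    rw [hfinalconf] at h1
    rw [← h1]
    rw [Finset.sum_ite_eq' Finset.univ t (fun _ => N₄)]
    rw [if_pos (Finset.mem_univ t)]
  show Relation.ReflTransGen (CupMove G) (fun _ => 1)
    (fun w => if w = t then ∑ v : Fin m × Fin k, (fun _ => (1:ℕ)) v else 0)
  have : (fun w => if w = t then ∑ v : Fin m × Fin k, (fun _ => (1:ℕ)) v else 0)
      = (fun w => if w = t then N₄ else 0) := by
    funext w
    rw [hsum]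
  rw [this, ← hfinalconf]
  exact hrun
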